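/- arXiv:1611.02208 — 2 statements merged into one kernel-verified Lean document; each statement's English description precedes it below -/
import Mathlib

section
/- Moments of the Dirichlet distribution as cycle index polynomials: for parameters α ∈ ℝ_{>0}^k and s ∈ ℝ^k, the n-th moment of s·X under Dir(α) satisfies E[(s·X)ⁿ] = [n! / (|α|)_n] · Z_n(p_1, p_2, …, p_n), where p_i = Σ_{j=1}^k s_j^i α_j and Z_n is the cycle index polynomial of S_n. Equivalently, Σ_{m ∈ ℕ^k, |m|=n} (sᵐ/m!) (α)_m = Z_n(p_1,…,p_n), where (α)_m = ∏_j (α_j)_{m_j}. -/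
/-- The finset of integer partitions of `n` in frequency representation:
`lam i` is the number of parts of size `i`, with `lam 0 = 0` and `∑ i * lam i = n`. -/
def freqPartitions (n : ℕ) : Finset (Fin (n+1) → ℕ) :=
  (Fintype.piFinset fun _ => Finset.range (n+1)).filter
    fun lam => lam 0 = 0 ∧ ∑ i, i.1 * lam i = n

/-- The complete Bell polynomial `B_n(x_1, …, x_n)`. -/
def bellPoly {R : Type*} [CommRing R] (n : ℕ) (x : ℕ → R) : R :=
  ∑ lam ∈ freqPartitions n,
    ((n.factorial / ∏ i, Nat.factorial i.1 ^ lam i * Nat.factorial (lam i) : ℕ) : R) *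
      ∏ i, x i.1 ^ lam i
/-- The cycle index polynomial `Z_n(x_1, …, x_n)` of the symmetric group `S_n`. -/
noncomputable def cycleIndex {K : Type*} [Field K] (n : ℕ) (x : ℕ → K) : K :=
  (n.factorial : K)⁻¹ *
    ∑ lam ∈ freqPartitions n,
      ((n.factorial / ∏ i, i.1 ^ lam i * Nat.factorial (lam i) : ℕ) : K) *
        ∏ i, x i.1 ^ lam i

open Finset

/-- auxiliary single-variable term -/
noncomputable def dmciF (x a : ℝ) (m : ℕ) : ℝ :=
  x ^ m / (m.factorial : ℝ) * (ascPochhammer ℝ m).eval a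

lemma dmciF_zero (x a : ℝ) : dmciF x a 0 = 1 := by
  simp [dmciF, ascPochhammer_zero]

/-- range form of the key Pochhammer identity -/
lemma asc_key (a : ℝ) (m : ℕ) :
    (m : ℝ) * ((ascPochhammer ℝ m).eval a / (m.factorial : ℝ))
      = a * ∑ l ∈ range m, (ascPochhammer ℝ l).eval a / (l.factorial : ℝ) := by
  induction m with
  | zero => simp
  | succ m ih =>
    rw [sum_range_succ, mul_add, ← ih]
    rw [ascPochhammer_succ_eval, Nat.factorial_succ]
    push_cast
    have hm : (m.factorial : ℝ) ≠ 0 := Nat.cast_ne_zero.mpr (Nat.factorial_ne_zero m)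
    field_simp
    ring

/-- convolution form -/
lemma dmciF_key (x a : ℝ) (m : ℕ) :
    (m : ℝ) * dmciF x a m = ∑ i ∈ Icc 1 m, a * x ^ i * dmciF x a (m - i) := by
  have h1 : (m : ℝ) * dmciF x a m
      = ∑ l ∈ range m, a * x ^ (m - l) * dmciF x a l := by
    have := asc_key a m
    calc (m : ℝ) * dmciF x a m
        = x ^ m * ((m : ℝ) * ((ascPochhammer ℝ m).eval a / (m.factorial : ℝ))) := by
          rw [dmciF]; ring
      _ = x ^ m * (a * ∑ l ∈ range m, (ascPochhammer ℝ l).eval a / (l.factorial : ℝ)) := by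
          rw [this]
      _ = ∑ l ∈ range m, a * x ^ (m - l) * dmciF x a l := by
          rw [Finset.mul_sum, Finset.mul_sum]
          refine Finset.sum_congr rfl fun l hl => ?_
          rw [mem_range] at hl
          rw [dmciF]
          rw [show x ^ m = x ^ (m - l) * x ^ l by rw [← pow_add]; congr 1; omega]
          ring
  rw [h1]
  refine Finset.sum_nbij' (fun l => m - l) (fun i => m - i) ?_ ?_ ?_ ?_ ?_
  · intro l hl; simp only [mem_range] at hl; simp only [mem_Icc]; omega
  · intro i hi; simp only [mem_Icc] at hi; simp only [mem_range]; omega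
  · intro l hl; simp only [mem_range] at hl; omega
  · intro i hi; simp only [mem_Icc] at hi; omega
  · intro l hl; simp only [mem_range] at hl; rw [show m - (m - l) = l by omega]

noncomputable def dmciL (k : ℕ) (s α : Fin k → ℝ) (n : ℕ) : ℝ :=
  ∑ m ∈ Finset.Nat.antidiagonalTuple k n, ∏ j, dmciF (s j) (α j) (m j)

lemma dmciL_zero (k : ℕ) (s α : Fin k → ℝ) : dmciL k s α 0 = 1 := by
  rw [dmciL, Finset.Nat.antidiagonalTuple_zero_right, Finset.sum_singleton]
  simp [dmciF_zero]

lemma sum_erase_eq (k : ℕ) (m : Fin k → ℕ) (j : Fin k) :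
    ∑ l ∈ Finset.univ \ {j}, m l = (∑ l, m l) - m j := by
  rw [Finset.sdiff_singleton_eq_erase]
  have := Finset.add_sum_erase Finset.univ m (Finset.mem_univ j)
  omega

lemma dmciC1 (k : ℕ) (s α : Fin k → ℝ) (n : ℕ) (j : Fin k) :
    ∑ m ∈ Finset.Nat.antidiagonalTuple k n, (m j : ℝ) * ∏ l, dmciF (s l) (α l) (m l)
      = ∑ i ∈ Icc 1 n, α j * s j ^ i * dmciL k s α (n - i) := by
  have step1 : ∀ m ∈ Finset.Nat.antidiagonalTuple k n,
      (m j : ℝ) * ∏ l, dmciF (s l) (α l) (m l)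
      = ∑ i ∈ Icc 1 (m j), α j * s j ^ i *
          ∏ l, dmciF (s l) (α l) (Function.update m j (m j - i) l) := by
    intro m _
    rw [← Finset.prod_erase_mul _ _ (Finset.mem_univ j), ← mul_assoc,
      mul_comm ((m j : ℝ)), mul_assoc, dmciF_key, Finset.mul_sum]
    refine Finset.sum_congr rfl fun i hi => ?_
    have hupd : ∏ l, dmciF (s l) (α l) (Function.update m j (m j - i) l)
        = (∏ l ∈ Finset.univ.erase j, dmciF (s l) (α l) (m l)) * dmciF (s j) (α j) (m j - i) := by
      rw [← Finset.prod_erase_mul _ _ (Finset.mem_univ j), Function.update_self]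
      congr 1
      exact Finset.prod_congr rfl fun l hl => by
        rw [Function.update_of_ne (Finset.ne_of_mem_erase hl)]
    rw [hupd]; ring
  rw [Finset.sum_congr rfl step1]
  have step2 : ∀ i ∈ Icc 1 n, α j * s j ^ i * dmciL k s α (n - i)
      = ∑ m' ∈ Finset.Nat.antidiagonalTuple k (n - i),
          α j * s j ^ i * ∏ l, dmciF (s l) (α l) (m' l) := by
    intro i _; rw [dmciL, Finset.mul_sum]
  rw [Finset.sum_congr rfl step2, Finset.sum_sigma', Finset.sum_sigma']
  refine Finset.sum_nbij'
    (fun q => ⟨q.2, Function.update q.1 j (q.1 j - q.2)⟩)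
    (fun q => ⟨Function.update q.2 j (q.2 j + q.1), q.1⟩) ?_ ?_ ?_ ?_ ?_
  · rintro ⟨m, i⟩ hq
    simp only [Finset.mem_sigma, Finset.Nat.mem_antidiagonalTuple, mem_Icc] at hq ⊢
    obtain ⟨hm, hi1, hi2⟩ := hq
    have hmj : m j ≤ n := hm ▸ Finset.single_le_sum (fun l _ => Nat.zero_le (m l)) (Finset.mem_univ j)
    refine ⟨⟨by omega, by omega⟩, ?_⟩
    rw [Finset.sum_update_of_mem (Finset.mem_univ j), sum_erase_eq, hm]
    omega
  · rintro ⟨i, m'⟩ hq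
    simp only [Finset.mem_sigma, Finset.Nat.mem_antidiagonalTuple, mem_Icc] at hq ⊢
    obtain ⟨⟨hi1, hi2⟩, hm'⟩ := hq
    have hmj' : m' j ≤ n - i :=
      hm' ▸ Finset.single_le_sum (fun l _ => Nat.zero_le (m' l)) (Finset.mem_univ j)
    constructor
    · rw [Finset.sum_update_of_mem (Finset.mem_univ j), sum_erase_eq, hm']
      omega
    · rw [Function.update_self]; omega
  · rintro ⟨m, i⟩ hq
    simp only [Finset.mem_sigma, Finset.Nat.mem_antidiagonalTuple, mem_Icc] at hq
    obtain ⟨hm, hi1, hi2⟩ := hq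
    have h1 : Function.update (Function.update m j (m j - i)) j (m j - i + i) = m := by
      funext l
      rcases eq_or_ne l j with rfl | hl
      · simp only [Function.update_self]; omega
      · simp only [Function.update_of_ne hl]
    dsimp only
    rw [Function.update_self, h1]
  · rintro ⟨i, m'⟩ hq
    simp only [Finset.mem_sigma, Finset.Nat.mem_antidiagonalTuple, mem_Icc] at hq
    have h2 : Function.update (Function.update m' j (m' j + i)) j (m' j + i - i) = m' := by
      funext l
      rcases eq_or_ne l j with rfl | hl
      · simp only [Function.update_self]; omega
      · simp only [Function.update_of_ne hl]
    dsimp only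
    rw [Function.update_self, h2]
  · rintro ⟨m, i⟩ _
    rfl

lemma dmciL_rec (k : ℕ) (s α : Fin k → ℝ) (n : ℕ) :
    (n : ℝ) * dmciL k s α n
      = ∑ i ∈ Icc 1 n, (∑ j, s j ^ i * α j) * dmciL k s α (n - i) := by
  have h1 : (n : ℝ) * dmciL k s α n
      = ∑ j, ∑ m ∈ Finset.Nat.antidiagonalTuple k n,
          (m j : ℝ) * ∏ l, dmciF (s l) (α l) (m l) := by
    rw [Finset.sum_comm, dmciL, Finset.mul_sum]
    refine Finset.sum_congr rfl fun m hm => ?_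
    rw [Finset.Nat.mem_antidiagonalTuple] at hm
    rw [← Finset.sum_mul, show ∑ j, (m j : ℝ) = (n : ℝ) by rw [← hm]; push_cast; rfl]
  rw [h1]
  rw [Finset.sum_congr rfl (fun j _ => dmciC1 k s α n j), Finset.sum_comm]
  refine Finset.sum_congr rfl fun i _ => ?_
  rw [Finset.sum_mul]
  refine Finset.sum_congr rfl fun j _ => ?_
  ring

noncomputable def dmciG (p : ℕ → ℝ) (i c : ℕ) : ℝ :=
  p i ^ c / ((i : ℝ) ^ c * (c.factorial : ℝ))

def dmciFP (N n : ℕ) : Finset (Fin (N+1) → ℕ) :=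
  (Fintype.piFinset fun _ => Finset.range (N+1)).filter
    fun lam => lam 0 = 0 ∧ ∑ i, i.1 * lam i = n

noncomputable def dmciW (p : ℕ → ℝ) (N n : ℕ) : ℝ :=
  ∑ lam ∈ dmciFP N n, ∏ i, dmciG p i.1 (lam i)

lemma dmciG_zero (p : ℕ → ℝ) (i : ℕ) : dmciG p i 0 = 1 := by
  simp [dmciG]

lemma dmciFP_zero (N : ℕ) : dmciFP N 0 = {fun _ => 0} := by
  ext lam
  simp only [dmciFP, Finset.mem_filter, Fintype.mem_piFinset, Finset.mem_range,
    Finset.mem_singleton]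
  constructor
  · rintro ⟨-, h0, hsum⟩
    funext i
    rcases eq_or_ne i 0 with rfl | hi
    · exact h0
    · have := Finset.sum_eq_zero_iff.mp hsum i (Finset.mem_univ i)
      have hi1 : i.1 ≠ 0 := fun h => hi (Fin.ext h)
      exact (Nat.mul_eq_zero.mp this).resolve_left hi1
  · rintro rfl
    refine ⟨fun i => Nat.succ_pos N, rfl, by simp⟩

lemma dmciW_zero (p : ℕ → ℝ) (N : ℕ) : dmciW p N 0 = 1 := by
  rw [dmciW, dmciFP_zero, Finset.sum_singleton]
  simp [dmciG_zero]

lemma dmciG_key (p : ℕ → ℝ) (i c : ℕ) (hi : 1 ≤ i) (hc : 1 ≤ c) :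
    ((i * c : ℕ) : ℝ) * dmciG p i c = p i * dmciG p i (c - 1) := by
  obtain ⟨c, rfl⟩ : ∃ c', c = c' + 1 := ⟨c - 1, by omega⟩
  rw [dmciG, dmciG, Nat.add_sub_cancel, pow_succ, pow_succ, Nat.factorial_succ]
  have hi0 : (i : ℝ) ≠ 0 := Nat.cast_ne_zero.mpr (by omega)
  have hic : ((i : ℝ)) ^ c ≠ 0 := pow_ne_zero _ hi0
  have hf : ((c.factorial : ℝ)) ≠ 0 := Nat.cast_ne_zero.mpr (Nat.factorial_ne_zero c)
  push_cast
  field_simp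

lemma weighted_sum_update (N : ℕ) (lam : Fin (N+1) → ℕ) (i : Fin (N+1)) (v : ℕ) :
    ∑ l, l.1 * Function.update lam i v l
      = i.1 * v + ((∑ l, l.1 * lam l) - i.1 * lam i) := by
  have h : ∀ l, l.1 * Function.update lam i v l
      = Function.update (fun l : Fin (N+1) => l.1 * lam l) i (i.1 * v) l := by
    intro l
    rcases eq_or_ne l i with rfl | hl
    · rw [Function.update_self, Function.update_self]
    · rw [Function.update_of_ne hl, Function.update_of_ne hl]
  rw [Finset.sum_congr rfl fun l _ => h l,
    Finset.sum_update_of_mem (Finset.mem_univ i),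
    sum_erase_eq (N+1) (fun l => l.1 * lam l) i]

lemma mem_dmciFP {N n : ℕ} {lam : Fin (N+1) → ℕ} :
    lam ∈ dmciFP N n ↔ (∀ l, lam l < N + 1) ∧ lam 0 = 0 ∧ ∑ l, l.1 * lam l = n := by
  simp [dmciFP, Fintype.mem_piFinset]

lemma dmciC2 (p : ℕ → ℝ) (N n : ℕ) (i : Fin (N+1)) (hi : 1 ≤ i.1) (hin : i.1 ≤ n)
    (hnN : n ≤ N) :
    ∑ lam ∈ dmciFP N n, ((i.1 * lam i : ℕ) : ℝ) * ∏ l, dmciG p l.1 (lam l)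
      = p i.1 * dmciW p N (n - i.1) := by
  have hi0 : i ≠ 0 := by
    intro h; rw [h] at hi; simp at hi
  rw [dmciW, Finset.mul_sum]
  rw [← Finset.sum_filter_of_ne (p := fun lam => 0 < lam i)
    (fun lam _ hne => by
      by_contra h
      push_neg at h
      interval_cases hl : lam i
      · simp at hne)]
  refine Finset.sum_nbij'
    (fun lam => Function.update lam i (lam i - 1))
    (fun lam' => Function.update lam' i (lam' i + 1)) ?_ ?_ ?_ ?_ ?_
  · intro lam hlam
    rw [Finset.mem_filter] at hlam
    obtain ⟨hlam, hpos⟩ := hlam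
    rw [mem_dmciFP] at hlam ⊢
    obtain ⟨hbd, h0, hsum⟩ := hlam
    have hle : i.1 * lam i ≤ n :=
      hsum ▸ Finset.single_le_sum (f := fun l : Fin (N+1) => l.1 * lam l)
        (fun l _ => Nat.zero_le _) (Finset.mem_univ i)
    obtain ⟨c, hc⟩ : ∃ c, lam i = c + 1 := ⟨lam i - 1, by omega⟩
    refine ⟨?_, ?_, ?_⟩
    · intro l
      rcases eq_or_ne l i with rfl | hl
      · rw [Function.update_self]; have := hbd l; omega
      · rw [Function.update_of_ne hl]; exact hbd l
    · rw [Function.update_of_ne (Ne.symm hi0)]; exact h0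
    · have hle2 : i.1 * c + i.1 ≤ n := by
        rw [hc, Nat.mul_add] at hle; omega
      rw [weighted_sum_update, hsum, hc, Nat.add_sub_cancel, Nat.mul_add]
      omega
  · intro lam' hlam'
    rw [mem_dmciFP] at hlam'
    obtain ⟨hbd, h0, hsum⟩ := hlam'
    have hle : i.1 * lam' i ≤ n - i.1 :=
      hsum ▸ Finset.single_le_sum (f := fun l : Fin (N+1) => l.1 * lam' l)
        (fun l _ => Nat.zero_le _) (Finset.mem_univ i)
    rw [Finset.mem_filter, mem_dmciFP]
    have hbd' : lam' i + 1 ≤ N := by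
      have h1 : lam' i + 1 ≤ i.1 * (lam' i + 1) := Nat.le_mul_of_pos_left _ (by omega)
      rw [Nat.mul_add] at h1
      omega
    refine ⟨⟨?_, ?_, ?_⟩, ?_⟩
    · intro l
      rcases eq_or_ne l i with rfl | hl
      · rw [Function.update_self]; omega
      · rw [Function.update_of_ne hl]; exact hbd l
    · rw [Function.update_of_ne (Ne.symm hi0)]; exact h0
    · rw [weighted_sum_update, hsum, Nat.mul_add]
      omega
    · rw [Function.update_self]; omega
  · intro lam hlam
    rw [Finset.mem_filter] at hlam
    obtain ⟨-, hpos⟩ := hlam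
    funext l
    rcases eq_or_ne l i with rfl | hl
    · rw [Function.update_self, Function.update_self]; omega
    · simp only [Function.update_of_ne hl]
  · intro lam' _
    funext l
    rcases eq_or_ne l i with rfl | hl
    · rw [Function.update_self, Function.update_self]; omega
    · simp only [Function.update_of_ne hl]
  · intro lam hlam
    rw [Finset.mem_filter, mem_dmciFP] at hlam
    obtain ⟨⟨hbd, h0, hsum⟩, hpos⟩ := hlam
    have hsplit : ∏ l, dmciG p l.1 (lam l)
        = (∏ l ∈ Finset.univ.erase i, dmciG p l.1 (lam l)) * dmciG p i.1 (lam i) :=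
      (Finset.prod_erase_mul _ _ (Finset.mem_univ i)).symm
    have hsplit' : ∏ l, dmciG p l.1 (Function.update lam i (lam i - 1) l)
        = (∏ l ∈ Finset.univ.erase i, dmciG p l.1 (lam l)) * dmciG p i.1 (lam i - 1) := by
      rw [← Finset.prod_erase_mul _ _ (Finset.mem_univ i), Function.update_self]
      congr 1
      exact Finset.prod_congr rfl fun l hl => by
        rw [Function.update_of_ne (Finset.ne_of_mem_erase hl)]
    rw [hsplit, hsplit', ← mul_assoc, mul_comm ((i.1 * lam i : ℕ) : ℝ), mul_assoc,
      dmciG_key p i.1 (lam i) hi hpos]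
    ring

lemma dmciC2' (p : ℕ → ℝ) (N n : ℕ) (i : Fin (N+1)) (hin : n < i.1) :
    ∑ lam ∈ dmciFP N n, ((i.1 * lam i : ℕ) : ℝ) * ∏ l, dmciG p l.1 (lam l) = 0 := by
  refine Finset.sum_eq_zero fun lam hlam => ?_
  rw [mem_dmciFP] at hlam
  obtain ⟨-, -, hsum⟩ := hlam
  have hle : i.1 * lam i ≤ n :=
    hsum ▸ Finset.single_le_sum (f := fun l : Fin (N+1) => l.1 * lam l)
      (fun l _ => Nat.zero_le _) (Finset.mem_univ i)
  have h0 : lam i = 0 := by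
    by_contra h
    have : i.1 ≤ i.1 * lam i := Nat.le_mul_of_pos_right _ (by omega)
    omega
  rw [h0, Nat.mul_zero, Nat.cast_zero, zero_mul]

lemma dmciW_rec (p : ℕ → ℝ) (N n : ℕ) (hnN : n ≤ N) :
    (n : ℝ) * dmciW p N n = ∑ x ∈ Icc 1 n, p x * dmciW p N (n - x) := by
  have h1 : (n : ℝ) * dmciW p N n
      = ∑ i : Fin (N+1), ∑ lam ∈ dmciFP N n,
          ((i.1 * lam i : ℕ) : ℝ) * ∏ l, dmciG p l.1 (lam l) := by
    rw [Finset.sum_comm, dmciW, Finset.mul_sum]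
    refine Finset.sum_congr rfl fun lam hlam => ?_
    rw [mem_dmciFP] at hlam
    rw [← Finset.sum_mul, ← Nat.cast_sum, hlam.2.2]
  rw [h1]
  have h2 : ∀ i : Fin (N+1),
      ∑ lam ∈ dmciFP N n, ((i.1 * lam i : ℕ) : ℝ) * ∏ l, dmciG p l.1 (lam l)
      = if 1 ≤ i.1 ∧ i.1 ≤ n then p i.1 * dmciW p N (n - i.1) else 0 := by
    intro i
    split_ifs with h
    · exact dmciC2 p N n i h.1 h.2 hnN
    · push_neg at h
      rcases Nat.lt_or_ge n i.1 with hlt | hge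
      · exact dmciC2' p N n i hlt
      · have hi0 : i.1 = 0 := by omega
        refine Finset.sum_eq_zero fun lam _ => ?_
        rw [hi0, Nat.zero_mul, Nat.cast_zero, zero_mul]
  rw [Finset.sum_congr rfl fun i _ => h2 i]
  have h3 : ∑ i : Fin (N+1), (if 1 ≤ i.1 ∧ i.1 ≤ n then p i.1 * dmciW p N (n - i.1) else 0)
      = ∑ x ∈ Finset.range (N+1), (if 1 ≤ x ∧ x ≤ n then p x * dmciW p N (n - x) else 0) :=
    Fin.sum_univ_eq_sum_range (fun x => if 1 ≤ x ∧ x ≤ n then p x * dmciW p N (n - x) else 0) (N+1)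
  rw [h3]
  rw [← Finset.sum_subset
    (show Finset.Icc 1 n ⊆ Finset.range (N+1) by
      intro x hx; rw [Finset.mem_Icc] at hx; rw [Finset.mem_range]; omega)
    (fun x _ hx => by
      rw [Finset.mem_Icc] at hx
      rw [if_neg (by omega)])]
  refine Finset.sum_congr rfl fun x hx => ?_
  rw [Finset.mem_Icc] at hx
  rw [if_pos hx]

lemma dmciL_eq_W (k : ℕ) (s α : Fin k → ℝ) (N : ℕ) :
    ∀ n, n ≤ N → dmciL k s α n = dmciW (fun i => ∑ j, s j ^ i * α j) N n := by
  intro n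
  induction n using Nat.strong_induction_on with
  | _ n ih =>
    intro hnN
    rcases Nat.eq_zero_or_pos n with rfl | hn
    · rw [dmciL_zero, dmciW_zero]
    · have hne : (n : ℝ) ≠ 0 := Nat.cast_ne_zero.mpr (by omega)
      have hL := dmciL_rec k s α n
      have hW := dmciW_rec (fun i => ∑ j, s j ^ i * α j) N n hnN
      have heq : ∑ i ∈ Icc 1 n, (∑ j, s j ^ i * α j) * dmciL k s α (n - i)
          = ∑ i ∈ Icc 1 n, (∑ j, s j ^ i * α j) *
              dmciW (fun i => ∑ j, s j ^ i * α j) N (n - i) := by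
        refine Finset.sum_congr rfl fun i hi => ?_
        rw [Finset.mem_Icc] at hi
        rw [ih (n - i) (by omega) (by omega)]
      field_simp at hL hW
      rw [← mul_left_cancel₀ hne (hL.trans (heq.trans hW.symm))]

lemma dmciDvd (n : ℕ) (lam : Fin (n+1) → ℕ) (h0 : lam 0 = 0)
    (hsum : ∑ i, i.1 * lam i = n) :
    (∏ i, i.1 ^ lam i * (lam i).factorial) ∣ n.factorial := by
  have h1 : (∏ i, i.1 ^ lam i * (lam i).factorial)
      ∣ ∏ i : Fin (n+1), (lam i * i.1).factorial := by
    refine Finset.prod_dvd_prod_of_dvd _ _ fun i _ => ?_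
    rcases Nat.eq_zero_or_pos i.1 with hi | hi
    · have : i = 0 := Fin.ext hi
      subst this
      rw [h0]
      simp
    · have h2 : i.1 ^ lam i ∣ (i.1.factorial) ^ lam i :=
        pow_dvd_pow_of_dvd (Nat.dvd_factorial hi le_rfl) _
    
      have h3 : (i.1.factorial) ^ lam i * (lam i).factorial ∣ (lam i * i.1).factorial :=
        ⟨Nat.uniformBell (lam i) i.1, by
          rw [← Nat.uniformBell_mul_eq (lam i) (by omega)]; ring⟩
      exact (mul_dvd_mul_right h2 _).trans h3
  refine h1.trans ?_
  have h4 := Nat.prod_factorial_dvd_factorial_sum Finset.univ (fun i : Fin (n+1) => lam i * i.1)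
  rwa [(Finset.sum_congr rfl fun (i : Fin (n+1)) _ => Nat.mul_comm (lam i) i.1).trans hsum] at h4

theorem dmci_final (k n : ℕ) (s α : Fin k → ℝ) :
    dmciL k s α n = cycleIndex n (fun i => ∑ j, s j ^ i * α j) := by
  set p : ℕ → ℝ := fun i => ∑ j, s j ^ i * α j with hp
  have hW : cycleIndex n p = dmciW p n n := by
    rw [cycleIndex, dmciW, Finset.mul_sum]
    refine Finset.sum_congr rfl fun lam hlam => ?_
    have hlam' := hlam
    rw [mem_dmciFP] at hlam'
    obtain ⟨hbd, h0, hsum⟩ := hlam'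
    have hdvd := dmciDvd n lam h0 hsum
    have hDpos : 0 < ∏ i, i.1 ^ lam i * (lam i).factorial := by
      refine Finset.prod_pos fun i _ => ?_
      rcases Nat.eq_zero_or_pos i.1 with hi | hi
      · have : i = 0 := Fin.ext hi
        subst this
        rw [h0]
        simp
      · positivity
    have hD0 : ((∏ i, i.1 ^ lam i * (lam i).factorial : ℕ) : ℝ) ≠ 0 :=
      Nat.cast_ne_zero.mpr (by omega)
    rw [Nat.cast_div hdvd hD0]
    have hn0 : ((n.factorial : ℕ) : ℝ) ≠ 0 := Nat.cast_ne_zero.mpr (Nat.factorial_ne_zero n)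
    rw [div_eq_mul_inv, ← mul_assoc, ← mul_assoc, inv_mul_cancel₀ hn0, one_mul]
    rw [show ∀ c : Fin (n+1) → ℕ, (∏ i, dmciG p i.1 (c i))
        = (∏ i, p i.1 ^ c i) / ∏ i, ((i.1:ℝ) ^ c i * ((c i).factorial : ℝ)) from
      fun c => by rw [← Finset.prod_div_distrib]; rfl]
    rw [mul_comm, div_eq_mul_inv, Nat.cast_prod]
    congr 2
    refine Finset.prod_congr rfl fun i _ => ?_
    push_cast
    ring
  rw [hW, dmciL_eq_W k s α n n le_rfl]


theorem dirichlet_moments_cycle_index (k n : ℕ) (s α : Fin k → ℝ)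
    (hα : ∀ j, 0 < α j) :
    ∑ m ∈ Finset.Nat.antidiagonalTuple k n,
        ∏ j, s j ^ m j / ((m j).factorial : ℝ) * (ascPochhammer ℝ (m j)).eval (α j)
      = cycleIndex n (fun i => ∑ j, s j ^ i * α j) := by
  exact dmci_final k n s α
end

section
/- Shift identity for normalized Dirichlet moments: with μ̃_n(s,α) = Σ_{m∈ℕ^k, |m|=n} (sᵐ/m!) ∏_j (α_j)_{m_j}, one has μ̃_{n−1}(s, α + e^ℓ) = Σ_{h=1}^{n} s_ℓ^{h−1} μ̃_{n−h}(s, α) for every ℓ ∈ [k] and n ≥ 1. -/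
/-- Normalized Dirichlet moment `μ̃_n(s, α) = ∑_{|m|=n} (s^m/m!) ∏_j (α_j)_{m_j}`. -/
noncomputable def dirMoment (k n : ℕ) (s α : Fin k → ℝ) : ℝ :=
  ∑ m ∈ Finset.Nat.antidiagonalTuple k n,
    ∏ j, s j ^ m j / ((m j).factorial : ℝ) * (ascPochhammer ℝ (m j)).eval (α j)

private lemma asc_shift (x : ℝ) (m : ℕ) :
    (ascPochhammer ℝ (m+1)).eval (x+1)
      = (ascPochhammer ℝ (m+1)).eval x + (m+1) * (ascPochhammer ℝ m).eval (x+1) := by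
  conv_lhs => rw [ascPochhammer_succ_right]
  conv_rhs => rw [ascPochhammer_succ_left]
  simp [Polynomial.eval_mul, Polynomial.eval_comp]
  ring

private lemma dirMoment_zero (k : ℕ) (s α : Fin k → ℝ) : dirMoment k 0 s α = 1 := by
  simp [dirMoment, Finset.Nat.antidiagonalTuple_zero_right]

private lemma dirMoment_rec (k n : ℕ) (s α : Fin k → ℝ) (ℓ : Fin k) :
    dirMoment k (n+1) s (α + Pi.single ℓ 1)
      = dirMoment k (n+1) s α + s ℓ * dirMoment k n s (α + Pi.single ℓ 1) := by
  classical
  set β := α + Pi.single ℓ 1 with hβ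
  have hβℓ : β ℓ = α ℓ + 1 := by simp [hβ]
  have hβj : ∀ j, j ≠ ℓ → β j = α j := by
    intro j hj; simp [hβ, Pi.single_eq_of_ne hj]
  set t : Fin k → ℕ → ℝ :=
    fun j m => s j ^ m / (m.factorial : ℝ) * (ascPochhammer ℝ m).eval (α j) with ht
  set t' : Fin k → ℕ → ℝ :=
    fun j m => s j ^ m / (m.factorial : ℝ) * (ascPochhammer ℝ m).eval (β j) with ht'
  have htt' : ∀ j, j ≠ ℓ → ∀ m, t' j m = t j m := by
    intro j hj m; simp [ht, ht', hβj j hj]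
  set D : ℕ → ℝ := fun m => match m with
    | 0 => 0
    | (r+1) => s ℓ * t' ℓ r with hD
  have key : ∀ m : ℕ, t' ℓ m = t ℓ m + D m := by
    intro m
    cases m with
    | zero => simp [ht, ht', hD]
    | succ r =>
      show s ℓ ^ (r+1) / ((r+1).factorial : ℝ) * (ascPochhammer ℝ (r+1)).eval (β ℓ)
        = s ℓ ^ (r+1) / ((r+1).factorial : ℝ) * (ascPochhammer ℝ (r+1)).eval (α ℓ)
          + s ℓ * (s ℓ ^ r / (r.factorial : ℝ) * (ascPochhammer ℝ r).eval (β ℓ))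
      rw [hβℓ, asc_shift]
      have h1 : ((r+1).factorial : ℝ) = (r+1) * (r.factorial : ℝ) := by
        push_cast [Nat.factorial_succ]; ring
      have h2 : (r.factorial : ℝ) ≠ 0 := by positivity
      have h3 : ((r:ℝ)+1) ≠ 0 := by positivity
      field_simp [h1]
      rw [h1]
      ring
  -- per-term decomposition
  have perterm : ∀ m : Fin k → ℕ,
      (∏ j, t' j (m j))
        = (∏ j, t j (m j)) + (∏ j ∈ Finset.univ.erase ℓ, t j (m j)) * D (m ℓ) := by
    intro m
    rw [← Finset.prod_erase_mul Finset.univ (fun j => t' j (m j)) (Finset.mem_univ ℓ),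
        ← Finset.prod_erase_mul Finset.univ (fun j => t j (m j)) (Finset.mem_univ ℓ)]
    have he : (∏ j ∈ Finset.univ.erase ℓ, t' j (m j))
        = ∏ j ∈ Finset.univ.erase ℓ, t j (m j) := by
      refine Finset.prod_congr rfl ?_
      intro j hj
      exact htt' j (Finset.ne_of_mem_erase hj) (m j)
    rw [he, key (m ℓ)]
    ring
  have step1 : dirMoment k (n+1) s β
      = dirMoment k (n+1) s α
        + ∑ m ∈ Finset.Nat.antidiagonalTuple k (n+1),
            (∏ j ∈ Finset.univ.erase ℓ, t j (m j)) * D (m ℓ) := by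
    unfold dirMoment
    rw [← Finset.sum_add_distrib]
    exact Finset.sum_congr rfl fun m _ => perterm m
  rw [step1]
  congr 1
  -- now the reindexing
  have hzero : ∀ m ∈ Finset.Nat.antidiagonalTuple k (n+1),
      (∏ j ∈ Finset.univ.erase ℓ, t j (m j)) * D (m ℓ) ≠ 0 → 0 < m ℓ := by
    intro m _ h
    rcases Nat.eq_zero_or_pos (m ℓ) with h0 | h1
    · exfalso; rw [h0] at h; exact h (by rw [show D 0 = 0 from rfl, mul_zero])
    · exact h1
  rw [← Finset.sum_filter_of_ne hzero]
  have := Finset.sum_nbij'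
    (s := (Finset.Nat.antidiagonalTuple k (n+1)).filter (fun m => 0 < m ℓ))
    (t := Finset.Nat.antidiagonalTuple k n)
    (f := fun m => (∏ j ∈ Finset.univ.erase ℓ, t j (m j)) * D (m ℓ))
    (g := fun m => (∏ j ∈ Finset.univ.erase ℓ, t j (m j)) * (s ℓ * t' ℓ (m ℓ)))
    (fun m => Function.update m ℓ (m ℓ - 1))
    (fun m => Function.update m ℓ (m ℓ + 1))
    ?_ ?_ ?_ ?_ ?_
  · rw [this]
    have : ∀ m ∈ Finset.Nat.antidiagonalTuple k n,
        (∏ j ∈ Finset.univ.erase ℓ, t j (m j)) * (s ℓ * t' ℓ (m ℓ))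
          = s ℓ * ∏ j, t' j (m j) := by
      intro m _
      rw [← Finset.prod_erase_mul Finset.univ (fun j => t' j (m j)) (Finset.mem_univ ℓ)]
      have he : (∏ j ∈ Finset.univ.erase ℓ, t' j (m j))
          = ∏ j ∈ Finset.univ.erase ℓ, t j (m j) :=
        Finset.prod_congr rfl fun j hj => htt' j (Finset.ne_of_mem_erase hj) (m j)
      rw [he]; ring
    rw [Finset.sum_congr rfl this, ← Finset.mul_sum]
    rfl
  · intro m hm
    simp only [Finset.mem_filter, Finset.Nat.mem_antidiagonalTuple] at hm ⊢
    obtain ⟨hsum, hpos⟩ := hm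
    rw [Finset.sum_update_of_mem (Finset.mem_univ ℓ)]
    have := Finset.add_sum_erase Finset.univ m (Finset.mem_univ ℓ)
    rw [Finset.erase_eq] at this
    omega
  · intro m hm
    simp only [Finset.mem_filter, Finset.Nat.mem_antidiagonalTuple] at hm ⊢
    rw [Finset.sum_update_of_mem (Finset.mem_univ ℓ)]
    have := Finset.add_sum_erase Finset.univ m (Finset.mem_univ ℓ)
    rw [Finset.erase_eq] at this
    constructor
    · omega
    · simp [Function.update]
  · intro m hm
    simp only [Finset.mem_filter] at hm
    funext j
    rcases eq_or_ne j ℓ with rfl | hj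
    · simp [Function.update]
      omega
    · simp [Function.update, hj]
  · intro m hm
    funext j
    rcases eq_or_ne j ℓ with rfl | hj
    · simp [Function.update]
    · simp [Function.update, hj]
  · intro m hm
    simp only [Finset.mem_filter] at hm
    obtain ⟨_, hpos⟩ := hm
    show (∏ j ∈ Finset.univ.erase ℓ, t j (m j)) * D (m ℓ)
      = (∏ j ∈ Finset.univ.erase ℓ, t j (Function.update m ℓ (m ℓ - 1) j))
          * (s ℓ * t' ℓ (Function.update m ℓ (m ℓ - 1) ℓ))
    have he : (∏ j ∈ Finset.univ.erase ℓ, t j (Function.update m ℓ (m ℓ - 1) j))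
        = ∏ j ∈ Finset.univ.erase ℓ, t j (m j) := by
      refine Finset.prod_congr rfl ?_
      intro j hj
      rw [Function.update_of_ne (Finset.ne_of_mem_erase hj)]
    rw [he, Function.update_self]
    obtain ⟨r, hr⟩ : ∃ r, m ℓ = r + 1 := ⟨m ℓ - 1, by omega⟩
    rw [hr]
    simp [hD]

private lemma dirMoment_shift_aux (k n : ℕ) (s α : Fin k → ℝ) (ℓ : Fin k) :
    dirMoment k n s (α + Pi.single ℓ 1)
      = ∑ h ∈ Finset.range (n+1), s ℓ ^ h * dirMoment k (n-h) s α := by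
  induction n with
  | zero => simp [dirMoment_zero]
  | succ n ih =>
    rw [dirMoment_rec, ih, Finset.sum_range_succ'
      (fun h => s ℓ ^ h * dirMoment k (n+1-h) s α)]
    simp only [pow_zero, one_mul, Nat.sub_zero]
    rw [Finset.mul_sum, add_comm]
    congr 1
    refine Finset.sum_congr rfl ?_
    intro h _
    have : n + 1 - (h + 1) = n - h := by omega
    rw [this]
    ring

theorem dirichlet_moment_shift (k n : ℕ) (hn : 1 ≤ n) (s α : Fin k → ℝ) (ℓ : Fin k) :
    dirMoment k (n-1) s (α + Pi.single ℓ 1)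
      = ∑ h ∈ Finset.range n, s ℓ ^ h * dirMoment k (n-1-h) s α := by
  obtain ⟨m, rfl⟩ : ∃ m, n = m + 1 := ⟨n - 1, by omega⟩
  simpa using dirMoment_shift_aux k m s α ℓ
end
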